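/- Let A be a complex symmetric N×N matrix with operator norm κ < 1, and w ∈ ℂ^N with |w| = 1. Define the phase φ(z,t) = e^{it} z w̄ᵀ + (1/2)(e^{it}z − w)A(e^{it}z − w)ᵀ − it − (|z|² + |w|²)/2 for z on the unit sphere and t ∈ ℝ. Then Re(φ(z,t)) ≤ 0, with equality if and only if e^{it}z = w. -/

import Mathlib

open scoped BigOperators Real
open Matrix
open scoped ComplexOrder

/-- `Q_A(z) = z A zᵀ`. -/
noncomputable def quadForm {N : ℕ} (A : Matrix (Fin N) (Fin N) ℂ) (z : Fin N → ℂ) : ℂ :=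
  ∑ i, ∑ j, z i * A i j * z j

/-- Hermitian pairing `z w̄ᵀ`. -/
noncomputable def dotc {N : ℕ} (z w : Fin N → ℂ) : ℂ :=
  ∑ j, z j * (starRingEnd ℂ) (w j)

/-- `|z|²`. -/
noncomputable def nsq {N : ℕ} (z : Fin N → ℂ) : ℝ :=
  ∑ j, Complex.normSq (z j)

/-- The phase
`φ(z,t) = e^{it} z w̄ᵀ + ½ Q_A(e^{it}z − w) − it − (|z|² + |w|²)/2`. -/
noncomputable def phase {N : ℕ} (A : Matrix (Fin N) (Fin N) ℂ) (w z : Fin N → ℂ)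
    (t : ℝ) : ℂ :=
  Complex.exp (Complex.I * t) * dotc z w +
    quadForm A (fun j => Complex.exp (Complex.I * t) * z j - w j) / 2 -
    Complex.I * t - ((nsq z + nsq w : ℝ) : ℂ) / 2

lemma nsq_nonneg' {N : ℕ} (v : Fin N → ℂ) : 0 ≤ nsq v :=
  Finset.sum_nonneg fun _ _ => Complex.normSq_nonneg _

lemma quad_bound {N : ℕ} (A : Matrix (Fin N) (Fin N) ℂ)
    (hA : (1 - Aᴴ * A).PosDef) (v : Fin N → ℂ) (hv : v ≠ 0) :
    (quadForm A v).re < nsq v := by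
  set u := A.mulVec v with hu
  have hQ : quadForm A v = ∑ i, v i * u i := by
    simp [quadForm, hu, Matrix.mulVec, dotProduct, Finset.mul_sum, mul_assoc]
  -- positive definiteness gives nsq u < nsq v
  have hpos := hA.dotProduct_mulVec_pos hv
  have key : star v ⬝ᵥ (1 - Aᴴ * A) *ᵥ v = ((nsq v - nsq u : ℝ) : ℂ) := by
    rw [Matrix.sub_mulVec, dotProduct_sub]
    have h1 : star v ⬝ᵥ (1 : Matrix (Fin N) (Fin N) ℂ) *ᵥ v = ((nsq v : ℝ) : ℂ) := by
      simp [Matrix.one_mulVec, dotProduct, nsq, Complex.normSq_eq_conj_mul_self]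
    have h2 : star v ⬝ᵥ (Aᴴ * A) *ᵥ v = ((nsq u : ℝ) : ℂ) := by
      rw [← Matrix.mulVec_mulVec, Matrix.dotProduct_mulVec, ← Matrix.star_mulVec, ← hu]
      simp [dotProduct, nsq, Complex.normSq_eq_conj_mul_self]
    rw [h1, h2]
    push_cast
    ring
  rw [key] at hpos
  have hlt : nsq u < nsq v := by
    have := Complex.zero_lt_real.mp hpos
    linarith
  -- Cauchy-Schwarz
  have habs : ‖quadForm A v‖ ≤ ∑ i, ‖v i‖ * ‖u i‖ := by
    rw [hQ]
    calc ‖∑ i, v i * u i‖ = ‖∑ i, v i * u i‖ := rfl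
      _ ≤ ∑ i, ‖v i * u i‖ := norm_sum_le _ _
      _ = ∑ i, ‖v i‖ * ‖u i‖ := by
          simp [norm_mul]
  have hcs : (∑ i, ‖v i‖ * ‖u i‖) ^ 2 ≤ nsq v * nsq u := by
    have := Finset.sum_mul_sq_le_sq_mul_sq Finset.univ (fun i => ‖v i‖)
      (fun i => ‖u i‖)
    simpa [nsq, Complex.sq_norm] using this
  have hvpos : 0 < nsq v := by
    rcases lt_or_eq_of_le (nsq_nonneg' v) with h | h
    · exact h
    · exfalso; apply hv
      funext i
      have := (Finset.sum_eq_zero_iff_of_nonneg (fun i _ => Complex.normSq_nonneg (v i))).mp h.symm i (Finset.mem_univ i)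
      simpa using Complex.normSq_eq_zero.mp this
  have hsum_lt : (∑ i, ‖v i‖ * ‖u i‖) < nsq v := by
    have h2 : (∑ i, ‖v i‖ * ‖u i‖) ^ 2 < (nsq v) ^ 2 := by
      calc (∑ i, ‖v i‖ * ‖u i‖) ^ 2 ≤ nsq v * nsq u := hcs
        _ < nsq v * nsq v := by exact mul_lt_mul_of_pos_left hlt hvpos
        _ = (nsq v) ^ 2 := by ring
    exact lt_of_pow_lt_pow_left₀ 2 (le_of_lt hvpos) h2
  calc (quadForm A v).re ≤ ‖quadForm A v‖ := Complex.re_le_norm _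
    _ ≤ ∑ i, ‖v i‖ * ‖u i‖ := habs
    _ < nsq v := hsum_lt

/-- `Re(φ(z,t)) ≤ 0`, with equality iff `e^{it}z = w`. -/
theorem stmt8 {N : ℕ} (A : Matrix (Fin N) (Fin N) ℂ) (hsym : A.IsSymm)
    (hA : (1 - Aᴴ * A).PosDef) (w z : Fin N → ℂ) (hw : nsq w = 1)
    (hz : nsq z = 1) (t : ℝ) :
    (phase A w z t).re ≤ 0 ∧
      ((phase A w z t).re = 0 ↔ (fun j => Complex.exp (Complex.I * t) * z j) = w) := by
  set e := Complex.exp (Complex.I * t) with he_def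
  set v : Fin N → ℂ := fun j => e * z j - w j with hv_def
  have he : Complex.normSq e = 1 := by
    rw [Complex.normSq_eq_norm_sq, he_def, Complex.norm_exp]
    simp
  have hvsum : nsq v = nsq z + nsq w - 2 * (e * dotc z w).re := by
    have hterm : ∀ j, Complex.normSq (v j) =
        Complex.normSq (z j) + Complex.normSq (w j)
          - 2 * (e * (z j * (starRingEnd ℂ) (w j))).re := by
      intro j
      show Complex.normSq (e * z j - w j) = _
      rw [Complex.normSq_sub, Complex.normSq_mul, he, one_mul]
      congr 2
      ring
    simp only [nsq, hterm, Finset.sum_sub_distrib, Finset.sum_add_distrib, ← Finset.mul_sum,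
      dotc, Finset.mul_sum, Complex.re_sum]
  have hre : (phase A w z t).re = ((quadForm A v).re - nsq v) / 2 := by
    have : (phase A w z t).re = (e * dotc z w).re + (quadForm A v).re / 2 - 1 := by
      simp [phase, hz, hw, ← he_def, ← hv_def]
      try ring
    rw [this]
    rw [hz, hw] at hvsum
    linarith
  by_cases hv0 : v = 0
  · have hwz : (fun j => e * z j) = w := by
      funext j
      have := congrFun hv0 j
      simpa [hv_def, sub_eq_zero] using this
    have hQ : quadForm A v = 0 := by simp [quadForm, hv0]
    have hn : nsq v = 0 := by simp [nsq, hv0]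
    constructor
    · rw [hre, hQ, hn]; simp
    · constructor
      · intro _; exact hwz
      · intro _; rw [hre, hQ, hn]; simp
  · have hlt := quad_bound A hA v hv0
    have h1 : (phase A w z t).re < 0 := by rw [hre]; linarith
    refine ⟨le_of_lt h1, ?_, ?_⟩
    · intro h; exact absurd h (ne_of_lt h1)
    · intro hwz
      exfalso
      apply hv0
      funext j
      have := congrFun hwz j
      simp [hv_def, sub_eq_zero, this]
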